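/- If a and e are integers with a ≥ 2 and e ≥ 3, then (a^e − 1)/(a − 1) has at least ω(e) − 1 distinct prime factors, and at least one prime factor of (a^e − 1)/(a − 1) is congruent to 1 modulo e. -/

import Mathlib

open Polynomial Finset


lemma geom_mul (a n : ℕ) (ha : 2 ≤ a) :
    (∑ i ∈ range n, a ^ i) * (a - 1) = a ^ n - 1 := by
  have h1 : 1 ≤ a := by omega
  have h2 : 1 ≤ a ^ n := Nat.one_le_pow _ _ (by omega)
  have key : (∑ i ∈ range n, (a : ℤ) ^ i) * ((a : ℤ) - 1) = (a : ℤ) ^ n - 1 :=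
    geom_sum_mul _ _
  have : (((∑ i ∈ range n, a ^ i) * (a - 1) : ℕ) : ℤ) = ((a ^ n - 1 : ℕ) : ℤ) := by
    push_cast [Nat.cast_sub h1, Nat.cast_sub h2]
    exact key
  exact_mod_cast this

lemma geom_div (a n : ℕ) (ha : 2 ≤ a) :
    (a ^ n - 1) / (a - 1) = ∑ i ∈ range n, a ^ i := by
  rw [← geom_mul a n ha]
  exact Nat.mul_div_cancel _ (by omega)

lemma geom_dvd_of_dvd (a p e : ℕ) (ha : 2 ≤ a) (hpe : p ∣ e) :
    (∑ i ∈ range p, a ^ i) ∣ (∑ i ∈ range e, a ^ i) := by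
  have h1 : a ^ p - 1 ∣ a ^ e - 1 := by
    obtain ⟨k, rfl⟩ := hpe
    have := Nat.sub_dvd_pow_sub_pow (a ^ p) 1 k
    simpa [← pow_mul] using this
  have h2 : (∑ i ∈ range p, a ^ i) * (a - 1) ∣ (∑ i ∈ range e, a ^ i) * (a - 1) := by
    rw [geom_mul a p ha, geom_mul a e ha]; exact h1
  exact (Nat.mul_dvd_mul_iff_right (show 0 < a - 1 by omega)).mp h2

lemma geom_one_lt (a p : ℕ) (ha : 2 ≤ a) (hp : 2 ≤ p) : 1 < ∑ i ∈ range p, a ^ i := by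
  have : ∑ i ∈ range 2, a ^ i ≤ ∑ i ∈ range p, a ^ i :=
    Finset.sum_le_sum_of_subset (Finset.range_subset_range.mpr hp)
  simp [Finset.sum_range_succ] at this
  omega

lemma part1 (a e : ℕ) (ha : 2 ≤ a) (he : 3 ≤ e) :
    e.primeFactors.card ≤ (∑ i ∈ range e, a ^ i).primeFactors.card := by
  set N := ∑ i ∈ range e, a ^ i with hN
  have hN1 : 1 < N := geom_one_lt a e ha (by omega)
  apply Finset.card_le_card_of_injOn (fun p => (∑ i ∈ range p, a ^ i).minFac)
  · intro p hp
    rw [Finset.mem_coe, Nat.mem_primeFactors] at hp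
    obtain ⟨hp, hpe, -⟩ := hp
    have h1 : 1 < ∑ i ∈ range p, a ^ i := geom_one_lt a p ha hp.two_le
    rw [Finset.mem_coe, Nat.mem_primeFactors]
    exact ⟨Nat.minFac_prime (by omega),
      (Nat.minFac_dvd _).trans (geom_dvd_of_dvd a p e ha hpe), by omega⟩
  · intro p1 h1 p2 h2 heq
    simp only [Finset.mem_coe, Nat.mem_primeFactors] at h1 h2
    obtain ⟨hp1, hp1e, -⟩ := h1
    obtain ⟨hp2, hp2e, -⟩ := h2
    by_contra hne
    set q := (∑ i ∈ range p1, a ^ i).minFac with hq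
    have hqprime : q.Prime := Nat.minFac_prime (by have := geom_one_lt a p1 ha hp1.two_le; omega)
    have hq1 : q ∣ ∑ i ∈ range p1, a ^ i := Nat.minFac_dvd _
    have hq2 : q ∣ ∑ i ∈ range p2, a ^ i := by
      have := Nat.minFac_dvd (∑ i ∈ range p2, a ^ i)
      simpa only [← heq] using this
    -- work in ZMod q
    haveI : Fact q.Prime := ⟨hqprime⟩
    have key : ∀ p : ℕ, p.Prime → q ∣ ∑ i ∈ range p, a ^ i →
        ((a : ZMod q) ^ p = 1 ∧ (∑ i ∈ range p, (a : ZMod q) ^ i = 0)) := by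
      intro p hp hdvd
      have hs : (∑ i ∈ range p, (a : ZMod q) ^ i) = 0 := by
        have : ((∑ i ∈ range p, a ^ i : ℕ) : ZMod q) = 0 :=
          (ZMod.natCast_eq_zero_iff _ _).mpr hdvd
        push_cast at this
        exact this
      constructor
      · have := geom_sum_mul (a : ZMod q) p
        rw [hs, zero_mul] at this
        exact sub_eq_zero.mp this.symm
      · exact hs
    obtain ⟨hpow1, hsum1⟩ := key p1 hp1 hq1
    obtain ⟨hpow2, hsum2⟩ := key p2 hp2 hq2
    have hcop : Nat.Coprime p1 p2 := (Nat.coprime_primes hp1 hp2).mpr hne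
    have horder : orderOf (a : ZMod q) ∣ Nat.gcd p1 p2 :=
      Nat.dvd_gcd (orderOf_dvd_of_pow_eq_one hpow1) (orderOf_dvd_of_pow_eq_one hpow2)
    rw [hcop] at horder
    have ha1 : (a : ZMod q) = 1 := orderOf_eq_one_iff.mp (Nat.eq_one_of_dvd_one horder)
    have hp1' : ((p1 : ℕ) : ZMod q) = 0 := by
      have := hsum1
      simp [ha1] at this
      exact this
    have hqp1 : q ∣ p1 := (ZMod.natCast_eq_zero_iff _ _).mp hp1'
    have hp2' : ((p2 : ℕ) : ZMod q) = 0 := by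
      have := hsum2
      simp [ha1] at this
      exact this
    have hqp2 : q ∣ p2 := (ZMod.natCast_eq_zero_iff _ _).mp hp2'
    have e1 : q = p1 := (Nat.prime_dvd_prime_iff_eq hqprime hp1).mp hqp1
    have e2 : q = p2 := (Nat.prime_dvd_prime_iff_eq hqprime hp2).mp hqp2
    exact hne (e1 ▸ e2)


-- casting a root of cyclotomic from ℤ to ZMod r
lemma root_mod {e r : ℕ} (a : ℕ) (hdvd : (r : ℤ) ∣ (cyclotomic e ℤ).eval (a : ℤ)) :
    IsRoot (cyclotomic e (ZMod r)) (a : ZMod r) := by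
  rw [IsRoot.def, ← map_cyclotomic_int e (ZMod r), eval_map, Polynomial.eval₂_at_natCast]
  simpa [ZMod.intCast_zmod_eq_zero_iff_dvd] using hdvd

lemma good_prime {a e r : ℕ} (he : 3 ≤ e) (hr : r.Prime)
    (hdvd : (r : ℤ) ∣ (cyclotomic e ℤ).eval (a : ℤ)) (hre : ¬ r ∣ e) :
    r ≡ 1 [MOD e] := by
  haveI : Fact r.Prime := ⟨hr⟩
  haveI : NeZero ((e : ℕ) : ZMod r) := ⟨by
    rw [Ne, ZMod.natCast_eq_zero_iff]; exact hre⟩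
  have hprim : IsPrimitiveRoot (a : ZMod r) e :=
    (isRoot_cyclotomic_iff).mp (root_mod a hdvd)
  have ha0 : (a : ZMod r) ≠ 0 := by
    intro h
    have := hprim.pow_eq_one
    rw [h, zero_pow (by omega : e ≠ 0)] at this
    exact one_ne_zero this.symm
  have horder : orderOf (a : ZMod r) = e := (hprim.eq_orderOf).symm
  have hdvd' : e ∣ r - 1 := by
    rw [← horder]
    exact orderOf_dvd_of_pow_eq_one (ZMod.pow_card_sub_one_eq_one ha0)
  have hr1 : 1 ≤ r := hr.one_lt.le.trans' (by omega)
  exact ((Nat.modEq_iff_dvd' hr.one_lt.le).mpr hdvd').symm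

-- root structure when r ∣ e
lemma prim_root_ordCompl {a e r : ℕ} (he0 : e ≠ 0) (hr : r.Prime)
    (hdvd : (r : ℤ) ∣ (cyclotomic e ℤ).eval (a : ℤ)) (hre : r ∣ e) :
    IsPrimitiveRoot (a : ZMod r) (e / r ^ e.factorization r) := by
  haveI : Fact r.Prime := ⟨hr⟩
  set m := e / r ^ e.factorization r with hm
  haveI : NeZero ((m : ℕ) : ZMod r) := ⟨by
    rw [Ne, ZMod.natCast_eq_zero_iff]
    exact Nat.not_dvd_ordCompl hr he0⟩
  have he' : e = r ^ e.factorization r * m := (Nat.ordProj_mul_ordCompl_eq_self e r).symm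
  have hroot : IsRoot (cyclotomic (r ^ e.factorization r * m) (ZMod r)) (a : ZMod r) := by
    rw [← he']
    exact root_mod a hdvd
  exact (isRoot_cyclotomic_prime_pow_mul_iff_of_charP).mp hroot

-- order divides r - 1
lemma ordCompl_dvd_sub_one {a e r : ℕ} (he0 : e ≠ 0) (hr : r.Prime) (hra : ¬ r ∣ a)
    (hdvd : (r : ℤ) ∣ (cyclotomic e ℤ).eval (a : ℤ)) (hre : r ∣ e) :
    (e / r ^ e.factorization r) ∣ r - 1 := by
  haveI : Fact r.Prime := ⟨hr⟩
  have hprim := prim_root_ordCompl he0 hr hdvd hre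
  have ha0 : (a : ZMod r) ≠ 0 := by
    rw [Ne, ZMod.natCast_eq_zero_iff]; exact hra
  have horder : orderOf (a : ZMod r) = e / r ^ e.factorization r := (hprim.eq_orderOf).symm
  rw [← horder]
  exact orderOf_dvd_of_pow_eq_one (ZMod.pow_card_sub_one_eq_one ha0)


lemma zmod_mul_self (q : ℕ) : ((q : ZMod (q ^ 2)) * q) = 0 := by
  have : ((q * q : ℕ) : ZMod (q ^ 2)) = 0 := by
    rw [← pow_two, ZMod.natCast_self]
  push_cast at this
  exact this

lemma zmod_pow_one_add (q : ℕ) (c : ZMod (q ^ 2)) (i : ℕ) :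
    (1 + c * (q : ZMod (q ^ 2))) ^ i = 1 + (i : ZMod (q ^ 2)) * c * (q : ZMod (q ^ 2)) := by
  have hq2 := zmod_mul_self q
  induction i with
  | zero => simp
  | succ n ih =>
    have hn1 : ((n + 1 : ℕ) : ZMod (q ^ 2)) = (n : ZMod (q ^ 2)) + 1 := by push_cast; ring
    conv_lhs => rw [pow_succ, ih]
    rw [hn1]
    linear_combination ((n : ZMod (q ^ 2)) * c ^ 2) * hq2

lemma sq_not_dvd_geom (q u : ℕ) (hq : 2 ≤ q) (hodd : Odd q) (hu : u % q = 1 % q) :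
    ¬ (q ^ 2 ∣ ∑ i ∈ range q, u ^ i) := by
  intro hdvd
  have h1 : 1 ≤ u := by
    rcases Nat.eq_zero_or_pos u with h | h
    · subst h; simp [Nat.zero_mod] at hu; omega
    · exact h
  have hmod : u % q = 1 := by rwa [Nat.one_mod_eq_one.mpr (by omega)] at hu
  obtain ⟨k, hk⟩ : ∃ k, u = 1 + q * k := by
    have := Nat.div_add_mod u q
    exact ⟨u / q, by omega⟩
  have hcast : ((∑ i ∈ range q, u ^ i : ℕ) : ZMod (q ^ 2)) = 0 :=
    (ZMod.natCast_eq_zero_iff _ _).mpr hdvd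
  obtain ⟨t, ht⟩ : ∃ t, q - 1 = 2 * t := by
    obtain ⟨j, hj⟩ := hodd
    exact ⟨j, by omega⟩
  have hgauss : ∑ i ∈ range q, i = q * t := by
    have h2 := Finset.sum_range_id_mul_two q
    have h3 : q * (2 * t) = 2 * (q * t) := by ring
    have h4 : (∑ i ∈ range q, i) * 2 = q * (2 * t) := by rw [h2, ← ht]
    omega
  have hsum : ((∑ i ∈ range q, u ^ i : ℕ) : ZMod (q ^ 2)) = (q : ZMod (q ^ 2)) := by
    push_cast
    have hu' : (u : ZMod (q ^ 2)) = 1 + (k : ZMod (q ^ 2)) * q := by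
      rw [hk]; push_cast; ring
    rw [hu']
    have hterm : ∀ i ∈ range q, ((1 : ZMod (q ^ 2)) + (k : ZMod (q ^ 2)) * q) ^ i
        = 1 + (i : ZMod (q ^ 2)) * (k : ZMod (q ^ 2)) * (q : ZMod (q ^ 2)) :=
      fun i _ => zmod_pow_one_add q (k : ZMod (q ^ 2)) i
    rw [Finset.sum_congr rfl hterm, Finset.sum_add_distrib]
    simp only [Finset.sum_const, Finset.card_range, nsmul_eq_mul, mul_one]
    have hsum2 : (∑ i ∈ range q, (i : ZMod (q ^ 2)) * k * q)
        = ((q * t : ℕ) : ZMod (q ^ 2)) * k * q := by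
      rw [← hgauss]
      push_cast
      rw [Finset.sum_mul, Finset.sum_mul]
    rw [hsum2]
    have hq2 := zmod_mul_self q
    push_cast
    linear_combination ((t : ZMod (q ^ 2)) * (k : ZMod (q ^ 2))) * hq2
  rw [hcast] at hsum
  have hdvd2 : (q : ℕ) ^ 2 ∣ q := (ZMod.natCast_eq_zero_iff q (q ^ 2)).mp hsum.symm
  have := Nat.le_of_dvd (by omega) hdvd2
  nlinarith

lemma size_helper (q b : ℕ) (hq : 3 ≤ q) (hb : 2 ≤ b) (hne : ¬ (b = 2 ∧ q = 3)) :
    q * (b + 1) + 1 ≤ b ^ q := by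
  rcases Nat.lt_or_ge q 4 with h4 | h4
  · have hq3 : q = 3 := by omega
    have hb3 : 3 ≤ b := by
      rcases Nat.lt_or_ge b 3 with h | h
      · exfalso; exact hne ⟨by omega, hq3⟩
      · exact h
    subst hq3
    have h3 : b ^ 3 = b * b * b := by ring
    nlinarith
  · clear hne hq
    induction q, h4 using Nat.le_induction with
    | base =>
      have h8 : 8 ≤ b * b * b := by nlinarith
      have h8b : 8 * b ≤ b ^ 4 := by
        calc 8 * b ≤ (b * b * b) * b := Nat.mul_le_mul_right _ h8
        _ = b ^ 4 := by ring
      omega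
    | succ n hn ih =>
      have h1 : b ^ (n + 1) = b ^ n * b := by ring
      have h2 : (n * (b + 1) + 1) * b ≤ b ^ n * b := Nat.mul_le_mul_right _ ih
      have hbb : 4 ≤ b * b := by nlinarith
      have h3 : n * 4 ≤ n * (b * b) := Nat.mul_le_mul_left n hbb
      nlinarith


lemma eval_real (n : ℕ) (x : ℤ) :
    (cyclotomic n ℝ).eval (x : ℝ) = (((cyclotomic n ℤ).eval x : ℤ) : ℝ) := by
  have h := eval_intCast_map (Int.castRingHom ℝ) (cyclotomic n ℤ) x
  rw [map_cyclotomic_int] at h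
  exact_mod_cast h

lemma prod_div_eval (n : ℕ) (hn : 0 < n) (x : ℤ) :
    ∏ d ∈ n.divisors, (cyclotomic d ℤ).eval x = x ^ n - 1 := by
  have h := prod_cyclotomic_eq_X_pow_sub_one hn ℤ
  calc ∏ d ∈ n.divisors, (cyclotomic d ℤ).eval x
      = (∏ d ∈ n.divisors, cyclotomic d ℤ).eval x := (eval_prod _ _ _).symm
    _ = (X ^ n - 1 : ℤ[X]).eval x := by rw [h]
    _ = x ^ n - 1 := by simp

lemma cyclo_dvd_M {a e q : ℕ} (ha : 2 ≤ a) (he0 : 0 < e) (hq : q.Prime) (hqe : q ∣ e) :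
    (cyclotomic e ℤ).eval (a : ℤ) ∣ ∑ i ∈ range q, ((a : ℤ) ^ (e / q)) ^ i := by
  have heq0 : 0 < e / q := Nat.div_pos (Nat.le_of_dvd he0 hqe) hq.pos
  have hsub : (e / q).divisors ⊆ e.divisors :=
    Nat.divisors_subset_of_dvd he0.ne' (Nat.div_dvd_of_dvd hqe)
  have ha1 : (1 : ℤ) < (a : ℤ) := by exact_mod_cast (by omega : 1 < a)
  have hu2 : (1 : ℤ) < (a : ℤ) ^ (e / q) := one_lt_pow₀ ha1 heq0.ne'
  have hprod := Finset.prod_sdiff (f := fun d => (cyclotomic d ℤ).eval (a : ℤ)) hsub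
  rw [prod_div_eval e he0, prod_div_eval (e / q) heq0] at hprod
  have hupow : ((a : ℤ) ^ (e / q)) ^ q = (a : ℤ) ^ e := by
    rw [← pow_mul, Nat.div_mul_cancel hqe]
  have hgeom : (∑ i ∈ range q, ((a : ℤ) ^ (e / q)) ^ i) * ((a : ℤ) ^ (e / q) - 1)
      = (a : ℤ) ^ e - 1 := by
    rw [geom_sum_mul, hupow]
  have hne' : ((a : ℤ) ^ (e / q) - 1) ≠ 0 := by
    intro h
    have := sub_eq_zero.mp h
    omega
  have hcancel : ∏ d ∈ e.divisors \ (e / q).divisors, (cyclotomic d ℤ).eval (a : ℤ)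
      = ∑ i ∈ range q, ((a : ℤ) ^ (e / q)) ^ i := by
    apply mul_right_cancel₀ hne'
    rw [hprod, hgeom]
  rw [← hcancel]
  apply Finset.dvd_prod_of_mem
  rw [Finset.mem_sdiff]
  constructor
  · exact Nat.mem_divisors_self e he0.ne'
  · intro hmem
    have := Nat.le_of_dvd heq0 (Nat.mem_divisors.mp hmem).1
    have := Nat.div_lt_self he0 hq.one_lt
    omega

lemma cyclo_pow_eval {q : ℕ} (n : ℕ) (hq : q.Prime) (hqn : q ∣ n) :
    ∀ (k : ℕ) (x : ℤ), (cyclotomic (n * q ^ k) ℤ).eval x = (cyclotomic n ℤ).eval (x ^ q ^ k)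
  | 0, x => by simp
  | (k + 1), x => by
    have hd : q ∣ n * q ^ k := dvd_mul_of_dvd_left hqn _
    have harith : n * q ^ (k + 1) = (n * q ^ k) * q := by ring
    rw [harith, ← cyclotomic_expand_eq_cyclotomic hq hd, expand_eval,
      cyclo_pow_eval n hq hqn k (x ^ q)]
    congr 1
    rw [← pow_mul, ← pow_succ']

lemma exceptional {a e : ℕ} (ha : 2 ≤ a) (he : 3 ≤ e)
    (hall : ∀ r : ℕ, r.Prime → (r : ℤ) ∣ (cyclotomic e ℤ).eval (a : ℤ) → r ∣ e) :
    a = 2 ∧ e = 6 := by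
  have he0 : e ≠ 0 := by omega
  set Φz : ℤ := (cyclotomic e ℤ).eval (a : ℤ) with hΦz
  have hΦpos : 0 < Φz := cyclotomic_pos (by omega) _
  set Φ : ℕ := Φz.natAbs with hΦdef
  have hΦcast : (Φ : ℤ) = Φz := Int.natAbs_of_nonneg hΦpos.le
  have hΦ1 : 1 < Φ := by
    have h := sub_one_pow_totient_lt_natAbs_cyclotomic_eval (n := e) (q := a)
      (by omega) (by omega)
    have h2 : 1 ≤ (a - 1) ^ e.totient := Nat.one_le_pow _ _ (by omega)
    omega
  have hΦN : Φ ∣ ∑ i ∈ range e, a ^ i := by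
    have hdvd : cyclotomic e ℤ ∣ ∑ i ∈ range e, (X : ℤ[X]) ^ i :=
      cyclotomic_dvd_geom_sum_of_dvd ℤ dvd_rfl (by omega)
    have h2 : Φz ∣ (∑ i ∈ range e, (X : ℤ[X]) ^ i).eval (a : ℤ) := eval_dvd hdvd
    have h3 : (∑ i ∈ range e, (X : ℤ[X]) ^ i).eval (a : ℤ)
        = ((∑ i ∈ range e, a ^ i : ℕ) : ℤ) := by
      rw [eval_finset_sum]
      push_cast
      simp
    rw [h3, ← hΦcast] at h2
    exact_mod_cast h2
  have hNae : (∑ i ∈ range e, a ^ i) ∣ a ^ e - 1 := ⟨a - 1, (geom_mul a e ha).symm⟩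
  have hΦae : Φ ∣ a ^ e - 1 := hΦN.trans hNae
  have hnotdvd_a : ∀ r : ℕ, r.Prime → r ∣ Φ → ¬ r ∣ a := by
    intro r hr hrΦ hra
    have h1 : r ∣ a ^ e - 1 := hrΦ.trans hΦae
    have h2 : r ∣ a ^ e := hra.trans (dvd_pow_self a he0)
    have h3 : 1 ≤ a ^ e := Nat.one_le_pow _ _ (by omega)
    have h4 : r ∣ a ^ e - (a ^ e - 1) := Nat.dvd_sub h2 h1
    have h5 : a ^ e - (a ^ e - 1) = 1 := by omega
    rw [h5] at h4
    exact Nat.Prime.one_lt hr |>.ne' (Nat.eq_one_of_dvd_one h4)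
  have hdvd_int : ∀ r : ℕ, r ∣ Φ → (r : ℤ) ∣ Φz := by
    intro r hr
    rw [← hΦcast]
    exact_mod_cast hr
  set q := Φ.minFac with hqdef
  have hq : q.Prime := Nat.minFac_prime (by omega)
  have hqΦ : q ∣ Φ := Nat.minFac_dvd _
  have hqe : q ∣ e := hall q hq (hdvd_int q hqΦ)
  have hqa : ¬ q ∣ a := hnotdvd_a q hq hqΦ
  have huniq : ∀ r : ℕ, r.Prime → r ∣ Φ → r = q := by
    intro r hr hrΦ
    by_contra hne
    have hre : r ∣ e := hall r hr (hdvd_int r hrΦ)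
    have hra : ¬ r ∣ a := hnotdvd_a r hr hrΦ
    have h1 : (e / r ^ e.factorization r) ∣ r - 1 :=
      ordCompl_dvd_sub_one he0 hr hra (hdvd_int r hrΦ) hre
    have h2 : (e / q ^ e.factorization q) ∣ q - 1 :=
      ordCompl_dvd_sub_one he0 hq hqa (hdvd_int q hqΦ) hqe
    have key : ∀ p1 p2 : ℕ, p1.Prime → p2.Prime → p1 ≠ p2 → p1 ∣ e →
        (e / p2 ^ e.factorization p2) ∣ p2 - 1 → p1 < p2 := by
      intro p1 p2 hp1 hp2 hne12 hp1e hdvd2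
      have he' : e = p2 ^ e.factorization p2 * (e / p2 ^ e.factorization p2) :=
        (Nat.ordProj_mul_ordCompl_eq_self e p2).symm
      have hp1e' : p1 ∣ p2 ^ e.factorization p2 * (e / p2 ^ e.factorization p2) := by
        rw [← he']; exact hp1e
      have hp1m : p1 ∣ e / p2 ^ e.factorization p2 := by
        rcases (Nat.Prime.dvd_mul hp1).mp hp1e' with h | h
        · exact absurd ((Nat.prime_dvd_prime_iff_eq hp1 hp2).mp
            (hp1.dvd_of_dvd_pow h)) hne12
        · exact h
      have hd := hp1m.trans hdvd2
      have := Nat.le_of_dvd (by have := hp2.two_le; omega) hd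
      have := hp1.two_le
      omega
    have hlt1 : q < r := key q r hq hr (fun h => hne h.symm) hqe h1
    have hlt2 : r < q := key r q hr hq hne hre h2
    omega
  obtain ⟨t, hΦpow⟩ : ∃ t, Φ = q ^ t :=
    ⟨_, Nat.eq_prime_pow_of_unique_prime_dvd (by omega) (fun hr hd => huniq _ hr hd)⟩
  have ht0 : t ≠ 0 := by
    intro h
    rw [h, pow_zero] at hΦpow
    omega
  set s := e.factorization q with hsdef
  have hs1 : 1 ≤ s := hq.factorization_pos_of_dvd he0 hqe
  set m := e / q ^ s with hmdef
  have hm0 : 0 < m := Nat.ordCompl_pos q he0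
  have hqm : ¬ q ∣ m := Nat.not_dvd_ordCompl hq he0
  have hesm : e = q ^ s * m := (Nat.ordProj_mul_ordCompl_eq_self e q).symm
  have hprim : IsPrimitiveRoot ((a : ZMod q)) m :=
    prim_root_ordCompl he0 hq (hdvd_int q hqΦ) hqe
  haveI : Fact q.Prime := ⟨hq⟩
  have hm_dvd : m ∣ q - 1 := ordCompl_dvd_sub_one he0 hq hqa (hdvd_int q hqΦ) hqe
  have heq : e / q = q ^ (s - 1) * m := by
    have h1 : e = (q ^ (s - 1) * m) * q := by
      rw [hesm]
      have h2 : q ^ s = q ^ (s - 1) * q := by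
        conv_lhs => rw [show s = (s - 1) + 1 by omega]
        rw [pow_succ]
      rw [h2]; ring
    rw [h1, Nat.mul_div_cancel _ hq.pos]
  set u := a ^ (e / q) with hudef
  have hu_mod : u % q = 1 % q := by
    have h1 : ((u : ℕ) : ZMod q) = ((1 : ℕ) : ZMod q) := by
      rw [hudef, heq]
      push_cast
      rw [mul_comm, pow_mul, hprim.pow_eq_one, one_pow]
    exact (ZMod.natCast_eq_natCast_iff u 1 q).mp h1
  set M := ∑ i ∈ range q, u ^ i with hMdef
  have hΦM : Φ ∣ M := by
    have h1 : Φz ∣ ∑ i ∈ range q, ((a : ℤ) ^ (e / q)) ^ i :=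
      cyclo_dvd_M (a := a) (e := e) (q := q) ha (by omega) hq hqe
    have h2 : (∑ i ∈ range q, ((a : ℤ) ^ (e / q)) ^ i) = ((M : ℕ) : ℤ) := by
      rw [hMdef, hudef]
      push_cast
      simp [pow_mul]
    rw [h2, ← hΦcast] at h1
    exact_mod_cast h1
  have hq2 : q ≠ 2 := by
    intro hq2
    rw [hq2] at hm_dvd hesm hqa
    have hm1 : m = 1 := by
      have := Nat.le_of_dvd (by omega) hm_dvd
      omega
    have hs2 : 2 ≤ s := by
      rcases Nat.lt_or_ge s 2 with h | h
      · exfalso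
        have : e = 2 := by rw [hesm, hm1, show s = 1 by omega]; ring
        omega
      · exact h
    have he2 : e = 2 * 2 ^ (s - 1) := by
      rw [hesm, hm1, mul_one]
      conv_lhs => rw [show s = 1 + (s - 1) by omega]
      rw [pow_add, pow_one]
    have hΦeval : Φz = (a : ℤ) ^ (2 ^ (s - 1)) + 1 := by
      rw [hΦz, he2, cyclo_pow_eval 2 Nat.prime_two dvd_rfl (s - 1) (a : ℤ),
        cyclotomic_two]
      simp
    have hΦnat : Φ = a ^ (2 ^ (s - 1)) + 1 := by
      have h5 : (Φ : ℤ) = ((a ^ (2 ^ (s - 1)) + 1 : ℕ) : ℤ) := by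
        rw [hΦcast, hΦeval]; push_cast; ring
      exact_mod_cast h5
    obtain ⟨j, hj⟩ : ∃ j, a ^ (2 ^ (s - 2)) = 2 * j + 1 := by
      have hodd : ¬ 2 ∣ a ^ (2 ^ (s - 2)) :=
        fun h => hqa (Nat.Prime.dvd_of_dvd_pow Nat.prime_two h)
      exact ⟨a ^ (2 ^ (s - 2)) / 2, by omega⟩
    have hpow2 : a ^ (2 ^ (s - 1)) = (a ^ (2 ^ (s - 2))) ^ 2 := by
      rw [← pow_mul]
      congr 1
      conv_lhs => rw [show s - 1 = (s - 2) + 1 by omega]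
      rw [pow_succ]
    have hw2 : 2 ≤ a ^ (2 ^ (s - 2)) := by
      calc 2 ≤ a := ha
      _ = a ^ 1 := (pow_one a).symm
      _ ≤ a ^ (2 ^ (s - 2)) := Nat.pow_le_pow_right (by omega) Nat.one_le_two_pow
    have hΦ5 : 5 ≤ Φ := by
      rw [hΦnat, hpow2, hj]
      nlinarith
    have h4 : ¬ (4 ∣ Φ) := by
      rw [hΦnat, hpow2, hj]
      have hexp : (2 * j + 1) ^ 2 = 4 * (j * j + j) + 1 := by ring
      rw [hexp]
      omega
    have ht2 : 2 ≤ t := by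
      have hmono : ∀ t' : ℕ, t' ≤ 1 → 2 ^ t' ≤ 2 := by
        intro t' ht'
        interval_cases t' <;> omega
      rcases Nat.lt_or_ge t 2 with h | h
      · have := hmono t (by omega)
        rw [hq2] at hΦpow
        omega
      · exact h
    rw [hq2] at hΦpow
    exact h4 (hΦpow ▸ pow_dvd_pow 2 ht2)
  have hqodd : Odd q := hq.odd_of_ne_two hq2
  have hq3 : 3 ≤ q := by
    have := hq.two_le
    omega
  have hsqM : ¬ q ^ 2 ∣ M := sq_not_dvd_geom q u hq.two_le hqodd hu_mod
  have ht1 : t = 1 := by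
    rcases Nat.lt_or_ge t 2 with h | h
    · omega
    · exact absurd ((pow_dvd_pow q h).trans (hΦpow ▸ hΦM)) hsqM
  have hΦq : Φ = q := by rw [hΦpow, ht1, pow_one]
  have ha2 : a = 2 := by
    by_contra ha3
    have ha3' : 3 ≤ a := by omega
    have hφe : q - 1 ≤ e.totient := by
      have hcop : Nat.Coprime (q ^ s) m := (hq.coprime_iff_not_dvd.mpr hqm).pow_left _
      have h1 : e.totient = (q ^ s).totient * m.totient := by
        rw [hesm]; exact Nat.totient_mul hcop
      have h2 : (q ^ s).totient = q ^ (s - 1) * (q - 1) :=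
        Nat.totient_prime_pow hq (by omega)
      have h3 : 1 ≤ m.totient := Nat.totient_pos.mpr hm0
      have h4 : 1 ≤ q ^ (s - 1) := Nat.one_le_pow _ _ hq.pos
      calc q - 1 ≤ q ^ (s - 1) * (q - 1) := Nat.le_mul_of_pos_left _ h4
      _ = (q ^ s).totient := h2.symm
      _ ≤ (q ^ s).totient * m.totient := Nat.le_mul_of_pos_right _ h3
      _ = e.totient := h1.symm
    have hlt := sub_one_pow_totient_lt_natAbs_cyclotomic_eval (n := e) (q := a)
      (by omega) (by omega)
    have hnatabs : ((cyclotomic e ℤ).eval (a : ℤ)).natAbs = q := by rw [← hΦq]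
    rw [hnatabs] at hlt
    have hchain : q ≤ (a - 1) ^ e.totient := by
      calc q ≤ 2 ^ (q - 1) := by
            have := Nat.lt_two_pow_self (n := q - 1)
            omega
      _ ≤ 2 ^ e.totient := Nat.pow_le_pow_right (by omega) hφe
      _ ≤ (a - 1) ^ e.totient := Nat.pow_le_pow_left (by omega) _
    omega
  subst ha2
  have hm2 : 2 ≤ m := by
    rcases Nat.lt_or_ge m 2 with h | h
    · exfalso
      have hm1 : m = 1 := by omega
      have h1 : ((2 : ℕ) : ZMod q) = ((1 : ℕ) : ZMod q) := by
        have h0 := hprim.pow_eq_one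
        rw [hm1, pow_one] at h0
        push_cast
        push_cast at h0
        rw [h0]
      have h2 : (2 : ℕ) ≡ 1 [MOD q] := (ZMod.natCast_eq_natCast_iff 2 1 q).mp h1
      have h3 : q ∣ 2 - 1 := (Nat.modEq_iff_dvd' (by omega)).mp h2.symm
      have := Nat.le_of_dvd (by omega) h3
      omega
    · exact h
  set bN : ℕ := 2 ^ (q ^ (s - 1)) with hbNdef
  have hbN2 : 2 ≤ bN := by
    calc 2 = 2 ^ 1 := (pow_one 2).symm
    _ ≤ bN := Nat.pow_le_pow_right (by omega) (Nat.one_le_pow _ _ hq.pos)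
  have he2 : e = (m * q) * q ^ (s - 1) := by
    rw [hesm]
    conv_lhs => rw [show s = (s - 1) + 1 by omega]
    rw [pow_succ]; ring
  have hΦeval : Φz = (cyclotomic (m * q) ℤ).eval ((bN : ℕ) : ℤ) := by
    rw [hΦz, he2, cyclo_pow_eval (m * q) hq (dvd_mul_left q m) (s - 1) ((2 : ℕ) : ℤ)]
    congr 1
  have hexpand := cyclotomic_expand_eq_cyclotomic_mul hq hqm ℤ
  have hkey : (q : ℤ) * (cyclotomic m ℤ).eval ((bN : ℕ) : ℤ)
      = (cyclotomic m ℤ).eval (((bN : ℕ) : ℤ) ^ q) := by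
    have h1 := congrArg (fun p => p.eval ((bN : ℕ) : ℤ)) hexpand
    simp only [expand_eval, eval_mul] at h1
    rw [h1, ← hΦeval, ← hΦcast, hΦq]
  have hsize : bN = 2 ∧ q = 3 := by
    by_contra hcon
    have hsh := size_helper q bN hq3 hbN2 (by tauto)
    have hx1 : (1 : ℝ) < (bN : ℝ) := by exact_mod_cast hbN2.trans_lt' one_lt_two
    have hxq1 : (1 : ℝ) < (bN : ℝ) ^ q := one_lt_pow₀ hx1 (by omega)
    have hB := sub_one_pow_totient_lt_cyclotomic_eval (n := m) (q := (bN : ℝ) ^ q) hm2 hxq1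
    have hA := cyclotomic_eval_le_add_one_pow_totient hx1 m
    have hkeyR : (q : ℝ) * (cyclotomic m ℝ).eval ((bN : ℝ))
        = (cyclotomic m ℝ).eval ((bN : ℝ) ^ q) := by
      have e1 : (cyclotomic m ℝ).eval ((bN : ℝ))
          = (((cyclotomic m ℤ).eval ((bN : ℕ) : ℤ) : ℤ) : ℝ) := by
        rw [← eval_real]; norm_cast
      have e2 : (cyclotomic m ℝ).eval ((bN : ℝ) ^ q)
          = (((cyclotomic m ℤ).eval (((bN : ℕ) : ℤ) ^ q) : ℤ) : ℝ) := by
        rw [← eval_real]; push_cast; ring_nf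
      rw [e1, e2, ← hkey]
      push_cast
      ring
    have hj1 : 1 ≤ m.totient := Nat.totient_pos.mpr hm0
    have hq1R : (1 : ℝ) ≤ (q : ℝ) := by exact_mod_cast hq.one_lt.le
    have hineq1 : ((q : ℝ) * ((bN : ℝ) + 1)) ^ m.totient ≤ ((bN : ℝ) ^ q - 1) ^ m.totient := by
      apply pow_le_pow_left₀ (by positivity)
      have h5 : (q * (bN + 1) + 1 : ℕ) ≤ (bN ^ q : ℕ) := hsh
      have h6 := (Nat.cast_le (α := ℝ)).mpr h5
      push_cast at h6
      linarith
    have hineq2 : (q : ℝ) * ((bN : ℝ) + 1) ^ m.totient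
        ≤ ((q : ℝ) * ((bN : ℝ) + 1)) ^ m.totient := by
      rw [mul_pow]
      have h1 : (q : ℝ) ≤ (q : ℝ) ^ m.totient := le_self_pow₀ hq1R (by omega)
      have h2 : (0 : ℝ) ≤ ((bN : ℝ) + 1) ^ m.totient := by positivity
      nlinarith
    have c3 : (q : ℝ) * (cyclotomic m ℝ).eval ((bN : ℝ))
        ≤ (q : ℝ) * ((bN : ℝ) + 1) ^ m.totient :=
      mul_le_mul_of_nonneg_left hA (by positivity)
    linarith [hB, hkeyR]
  obtain ⟨hbN, hq3'⟩ := hsize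
  have hs1' : s = 1 := by
    have h1 : q ^ (s - 1) = 1 := by
      rw [hbNdef] at hbN
      have h2 : (2 : ℕ) ^ (q ^ (s - 1)) = 2 ^ 1 := by rw [hbN, pow_one]
      exact Nat.pow_right_injective (le_refl 2) h2
    by_contra hs0
    have h3 : q ≤ q ^ (s - 1) := Nat.le_self_pow (by omega) q
    omega
  have hm2' : m = 2 := by
    have := Nat.le_of_dvd (by omega) hm_dvd
    omega
  refine ⟨rfl, ?_⟩
  rw [hesm, hs1', hm2', hq3']
  norm_num

/-- If `a` and `e` are integers with `a ≥ 2` and `e ≥ 3`, then `(a^e − 1)/(a − 1)` has at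
least `ω(e) − 1` distinct prime factors, and at least one prime factor of
`(a^e − 1)/(a − 1)` is congruent to `1` modulo `e`. -/
theorem stmt_4 (a e : ℕ) (ha : 2 ≤ a) (he : 3 ≤ e) :
    e.primeFactors.card - 1 ≤ ((a ^ e - 1) / (a - 1)).primeFactors.card ∧
    ∃ q : ℕ, q.Prime ∧ q ∣ (a ^ e - 1) / (a - 1) ∧ q ≡ 1 [MOD e] := by
  rw [geom_div a e ha]
  constructor
  · exact le_trans (Nat.sub_le _ _) (part1 a e ha he)
  · by_cases hex : ∃ r : ℕ, r.Prime ∧ (r : ℤ) ∣ (cyclotomic e ℤ).eval (a : ℤ) ∧ ¬ r ∣ e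
    · obtain ⟨r, hr, hrΦ, hre⟩ := hex
      refine ⟨r, hr, ?_, good_prime he hr hrΦ hre⟩
      have hΦN : (cyclotomic e ℤ).eval (a : ℤ) ∣ ((∑ i ∈ range e, a ^ i : ℕ) : ℤ) := by
        have hdvd : cyclotomic e ℤ ∣ ∑ i ∈ range e, (X : ℤ[X]) ^ i :=
          cyclotomic_dvd_geom_sum_of_dvd ℤ dvd_rfl (by omega)
        have h2 := eval_dvd (x := (a : ℤ)) hdvd
        have h3 : (∑ i ∈ range e, (X : ℤ[X]) ^ i).eval (a : ℤ)
            = ((∑ i ∈ range e, a ^ i : ℕ) : ℤ) := by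
          rw [eval_finset_sum]; push_cast; simp
        rwa [h3] at h2
      have h4 := hrΦ.trans hΦN
      exact_mod_cast h4
    · push_neg at hex
      obtain ⟨ha2, he6⟩ := exceptional ha he hex
      subst ha2; subst he6
      refine ⟨7, by norm_num, by decide, by decide⟩
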